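/- Let P = conv(e_1,...,e_k, 0) ⊆ ℝ^k be the standard simplex and let a_1,...,a_k ∈ ℝ^k span ℝ^k. Define C = {x ∈ ℝ^k : x_1 a_1a_1^T + ... + x_k a_ka_k^T + (1 − Σx_i) B ⪰ 0} for a symmetric psd matrix B. Let d ∈ ℝ^k with d_i = √(B'_{ii}) where B' = UBU^T and U is the invertible map with U a_i = e_i, and define C' = {x : x_1 e_1e_1^T + ... + x_k e_ke_k^T + (1 − Σx_i) dd^T ⪰ 0} pulled back along the change of coordinates. Then e_1,...,e_k, 0 ∈ C' and C' ⊆ C. -/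

import Mathlib

open Matrix in
lemma aux_mul_vecMulVec {k : ℕ} (A : Matrix (Fin k) (Fin k) ℝ) (u v : Fin k → ℝ) :
    A * Matrix.vecMulVec u v * Aᵀ = Matrix.vecMulVec (A *ᵥ u) (A *ᵥ v) := by
  rw [vecMulVec_eq Unit, vecMulVec_eq Unit,
    ← Matrix.mul_assoc A (replicateCol Unit u) (replicateRow Unit v), ← replicateCol_mulVec,
    Matrix.mul_assoc, ← replicateRow_vecMul, vecMul_transpose]

open Matrix in
lemma aux_vecMulVec_psd {k : ℕ} (d : Fin k → ℝ) : (Matrix.vecMulVec d d).PosSemidef := by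
  refine Matrix.PosSemidef.of_dotProduct_mulVec_nonneg ?_ ?_
  · ext i j
    simp [Matrix.conjTranspose_apply, Matrix.vecMulVec_apply, mul_comm]
  · intro x
    have : (star x) ⬝ᵥ (Matrix.vecMulVec d d *ᵥ x) = (d ⬝ᵥ x) * (d ⬝ᵥ x) := by
      simp only [dotProduct, Matrix.mulVec, Matrix.vecMulVec_apply, star_trivial,
        Finset.mul_sum, Finset.sum_mul]
      exact Finset.sum_congr rfl fun p _ => Finset.sum_congr rfl fun q _ => by ring
    rw [this]
    exact mul_self_nonneg _

open Matrix in
lemma aux_schur {k : ℕ} {A : Matrix (Fin k) (Fin k) ℝ} (hA : A.PosSemidef)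
    (W : Matrix (Fin k) (Fin k) ℝ) :
    (Matrix.of fun i j => A i j * (Wᵀ * W) i j).PosSemidef := by
  refine Matrix.PosSemidef.of_dotProduct_mulVec_nonneg ?_ ?_
  · have h1 : ∀ i j, A j i = A i j := fun i j => by
      have := congrFun (congrFun hA.1 i) j
      simpa using this
    ext i j
    simp only [Matrix.conjTranspose_apply, Matrix.of_apply, star_trivial, Matrix.mul_apply,
      Matrix.transpose_apply]
    rw [h1]
    congr 1
    exact Finset.sum_congr rfl fun l _ => by ring
  · intro x
    have key : (star x) ⬝ᵥ ((Matrix.of fun i j => A i j * (Wᵀ * W) i j) *ᵥ x)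
        = ∑ l, (star fun i => W l i * x i) ⬝ᵥ (A *ᵥ fun i => W l i * x i) := by
      simp only [dotProduct, Matrix.mulVec, Matrix.of_apply, Matrix.mul_apply,
        Matrix.transpose_apply, star_trivial, Finset.mul_sum, Finset.sum_mul]
      refine (Finset.sum_congr rfl fun i _ => Finset.sum_comm).trans ?_
      rw [Finset.sum_comm]
      exact Finset.sum_congr rfl fun l _ => Finset.sum_congr rfl fun i _ =>
        Finset.sum_congr rfl fun j _ => by ring
    rw [key]
    exact Finset.sum_nonneg fun l _ => hA.dotProduct_mulVec_nonneg _

open Matrix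

theorem stmt_18 (k : ℕ) (a : Fin k → Fin k → ℝ) (U B : Matrix (Fin k) (Fin k) ℝ)
    (hspan : Submodule.span ℝ (Set.range a) = ⊤)
    (hU : IsUnit U)
    (hUa : ∀ i, U.mulVec (a i) = Pi.single i 1)
    (hB : B.PosSemidef) :
    let B' : Matrix (Fin k) (Fin k) ℝ := U * B * U.transpose
    let d : Fin k → ℝ := fun i => Real.sqrt (B' i i)
    let C : Set (Fin k → ℝ) := {x | (∑ i, x i • Matrix.vecMulVec (a i) (a i)
      + (1 - ∑ i, x i) • B).PosSemidef}
    let C' : Set (Fin k → ℝ) := {x | (Matrix.diagonal x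
      + (1 - ∑ i, x i) • Matrix.vecMulVec d d).PosSemidef}
    (∀ i, Pi.single i (1 : ℝ) ∈ C') ∧ (0 : Fin k → ℝ) ∈ C' ∧ C' ⊆ C := by
  intro B' d C C'
  have hct : ∀ (M : Matrix (Fin k) (Fin k) ℝ), Mᴴ = Mᵀ := fun M =>
    Matrix.conjTranspose_eq_transpose_of_trivial M
  have hB' : B'.PosSemidef := by
    have := hB.mul_mul_conjTranspose_same U
    rwa [hct] at this
  have hdiagB' : ∀ i, 0 ≤ B' i i := by
    intro i
    have := hB'.dotProduct_mulVec_nonneg (Pi.single i 1)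
    simpa [Matrix.mulVec_single, dotProduct, Pi.single_apply, ite_mul,
      Finset.sum_ite_eq, Finset.sum_ite_eq'] using this
  have hd_sq : ∀ i, d i * d i = B' i i := fun i => Real.mul_self_sqrt (hdiagB' i)
  refine ⟨?_, ?_, ?_⟩
  · -- vertices
    intro i
    show (Matrix.diagonal (Pi.single i 1)
      + (1 - ∑ j, Pi.single i (1:ℝ) j) • Matrix.vecMulVec d d).PosSemidef
    have hs : (∑ j, Pi.single i (1:ℝ) j) = 1 := by
      simp [Finset.sum_pi_single]
    rw [hs, sub_self, zero_smul, add_zero]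
    exact Matrix.PosSemidef.diagonal fun j => by
      by_cases h : j = i <;> simp [Pi.single_apply, h]
  · -- zero
    show (Matrix.diagonal (0 : Fin k → ℝ)
      + (1 - ∑ i, (0 : Fin k → ℝ) i) • Matrix.vecMulVec d d).PosSemidef
    simp only [Matrix.diagonal_zero, Pi.zero_apply, Finset.sum_const_zero, sub_zero,
      one_smul, zero_add]
    have hz : Matrix.diagonal (0 : Fin k → ℝ) = 0 := by
      ext i j; by_cases h : i = j <;> simp [h]
    rw [hz, zero_add]
    exact aux_vecMulVec_psd d
  · -- inclusion
    intro x hx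
    have hM' : (Matrix.diagonal x + (1 - ∑ i, x i) • Matrix.vecMulVec d d).PosSemidef := hx
    set c : ℝ := 1 - ∑ i, x i with hc
    set M' : Matrix (Fin k) (Fin k) ℝ := Matrix.diagonal x + c • Matrix.vecMulVec d d with hM'def
    have hM'diagnn : ∀ i, 0 ≤ M' i i := by
      intro i
      have := hM'.dotProduct_mulVec_nonneg (Pi.single i 1)
      simpa [Matrix.mulVec_single, dotProduct, Pi.single_apply, ite_mul,
        Finset.sum_ite_eq, Finset.sum_ite_eq'] using this
    -- zero-row fact
    have hzero : ∀ i, d i = 0 → ∀ j, B' i j = 0 := by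
      intro i hdi j
      have hBii : B' i i = 0 := by
        have h0 := Real.sqrt_eq_zero (hdiagB' i) |>.mp hdi
        exact h0
      have hform : (star (Pi.single i 1) : Fin k → ℝ) ⬝ᵥ (B' *ᵥ Pi.single i 1) = 0 := by
        simpa [Matrix.mulVec_single, dotProduct, Pi.single_apply, ite_mul,
          Finset.sum_ite_eq, Finset.sum_ite_eq'] using hBii
      have hcol := (hB'.dotProduct_mulVec_zero_iff (Pi.single i 1)).mp hform
      have hji : B' j i = 0 := by
        have := congrFun hcol j
        simpa [Matrix.mulVec_single] using this
      have hsymm : B' i j = B' j i := by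
        have := congrFun (congrFun hB'.1 j) i
        simpa using this
      rw [hsymm, hji]
    -- factor B'
    open scoped MatrixOrder in
    obtain ⟨L, hL⟩ := CStarAlgebra.nonneg_iff_eq_star_mul_self.mp hB'.nonneg
    rw [Matrix.star_eq_conjTranspose] at hL
    set e : Fin k → ℝ := fun i => (d i)⁻¹ with he
    set W : Matrix (Fin k) (Fin k) ℝ := L * Matrix.diagonal e with hW
    have hWW : ∀ i j, (Wᵀ * W) i j = e i * B' i j * e j := by
      intro i j
      have : Wᵀ * W = Matrix.diagonal e * B' * Matrix.diagonal e := by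
        rw [hW, Matrix.transpose_mul, Matrix.diagonal_transpose, hL, hct]
        simp [Matrix.mul_assoc]
      rw [this, Matrix.mul_diagonal, Matrix.diagonal_mul]
    set f : Fin k → ℝ := fun i => if d i = 0 then 1 else 0 with hf
    -- the key psd matrix
    have hN' : (Matrix.diagonal x + c • B').PosSemidef := by
      have hP := aux_schur hM' W
      have hQ : (Matrix.diagonal fun i => M' i i * f i).PosSemidef :=
        Matrix.PosSemidef.diagonal fun i => mul_nonneg (hM'diagnn i)
          (by by_cases h : d i = 0 <;> simp [hf, h])
      have hEq : Matrix.diagonal x + c • B'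
          = (Matrix.of fun i j => M' i j * (Wᵀ * W) i j)
            + Matrix.diagonal fun i => M' i i * f i := by
        ext i j
        rw [Matrix.add_apply, Matrix.add_apply, Matrix.of_apply, hWW, Matrix.smul_apply]
        by_cases hij : i = j
        · subst hij
          rw [Matrix.diagonal_apply_eq, Matrix.diagonal_apply_eq]
          have hM'ii : M' i i = x i + c * (d i * d i) := by
            simp [hM'def, Matrix.vecMulVec_apply, smul_eq_mul]
          by_cases hd : d i = 0
          · have hB0 : B' i i = 0 := hzero i hd i
            simp [hM'ii, hd, hB0, hf, smul_eq_mul]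
          · have hBii : B' i i = d i * d i := (hd_sq i).symm
            rw [hM'ii, hf]
            simp only [if_neg hd]
            rw [he]
            field_simp [hBii] <;> rw [hBii] <;> ring
        · rw [Matrix.diagonal_apply_ne _ hij, Matrix.diagonal_apply_ne _ hij]
          have hM'ij : M' i j = c * (d i * d j) := by
            simp [hM'def, Matrix.vecMulVec_apply, Matrix.diagonal_apply_ne _ hij, smul_eq_mul]
          by_cases hdi : d i = 0
          · simp [hM'ij, hdi, hzero i hdi j, smul_eq_mul]
          by_cases hdj : d j = 0
          · have : B' i j = 0 := by
              have hsymm : B' i j = B' j i := by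
                have := congrFun (congrFun hB'.1 j) i
                simpa using this
              rw [hsymm]; exact hzero j hdj i
            simp [hM'ij, hdj, this, smul_eq_mul]
          · rw [hM'ij, he]
            field_simp <;> ring
      rw [hEq]
      exact hP.add hQ
    -- transport back
    have hdet : IsUnit U.det := (Matrix.isUnit_iff_isUnit_det U).mp hU
    set V : Matrix (Fin k) (Fin k) ℝ := U⁻¹ with hV
    have hVU : V * U = 1 := Matrix.nonsing_inv_mul U hdet
    have haV : ∀ i, a i = V *ᵥ Pi.single i 1 := fun i => by
      rw [← hUa i, Matrix.mulVec_mulVec, hVU, Matrix.one_mulVec]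
    show (∑ i, x i • Matrix.vecMulVec (a i) (a i) + c • B).PosSemidef
    have hrepr : ∑ i, x i • Matrix.vecMulVec (a i) (a i) + c • B
        = V * (Matrix.diagonal x + c • B') * Vᴴ := by
      rw [hct]
      have h1 : V * B' * Vᵀ = B := by
        show V * (U * B * Uᵀ) * Vᵀ = B
        have : Uᵀ * Vᵀ = 1 := by rw [← Matrix.transpose_mul, hVU, Matrix.transpose_one]
        calc V * (U * B * Uᵀ) * Vᵀ = (V * U) * B * (Uᵀ * Vᵀ) := by
              noncomm_ring [Matrix.mul_assoc]
          _ = B := by rw [hVU, this, Matrix.one_mul, Matrix.mul_one]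
      have hdiag_sum : Matrix.diagonal x
          = ∑ i, x i • Matrix.vecMulVec (Pi.single i 1) (Pi.single i (1:ℝ)) := by
        ext p q
        rw [Matrix.sum_apply]
        by_cases hpq : p = q
        · subst hpq
          simp [Matrix.vecMulVec_apply, Pi.single_apply]
        · rw [Matrix.diagonal_apply_ne _ hpq]
          refine (Finset.sum_eq_zero fun i _ => ?_).symm
          simp only [Matrix.smul_apply, Matrix.vecMulVec_apply, smul_eq_mul, Pi.single_apply]
          rcases eq_or_ne p i with rfl | hp
          · simp [Ne.symm hpq]
          · simp [hp]
      have h2 : V * Matrix.diagonal x * Vᵀ = ∑ i, x i • Matrix.vecMulVec (a i) (a i) := by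
        rw [hdiag_sum, Matrix.mul_sum, Matrix.sum_mul]
        refine Finset.sum_congr rfl fun i _ => ?_
        rw [Matrix.mul_smul, Matrix.smul_mul, aux_mul_vecMulVec, ← haV]
      rw [Matrix.mul_add, Matrix.add_mul, h2, Matrix.mul_smul, Matrix.smul_mul, h1]
    rw [hrepr]
    exact hN'.mul_mul_conjTranspose_same V
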